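/- Fix integers N, r, s ≥ 0 and 0 < q < 1. For t ∈ [0,1]^N define B_r(t) = ∫_{[0,1]^r} q^{#{(i,u) : y_u > t_i}} dy and C_s(t) = ∫_{[0,1]^s} q^{#{(i,w) : z_w > 1 − t_i}} dz. Then ∫_{[0,1]^N} B_r(t) C_s(t) dt ≤ A_{N,r}(q) · A_{N,s}(q). -/

import Mathlib

open MeasureTheory

noncomputable section

def mIcc : Measure ℝ := volume.restrict (Set.Icc 0 1)

instance : IsProbabilityMeasure mIcc :=
  ⟨by rw [mIcc, Measure.restrict_apply_univ, Real.volume_Icc]; norm_num⟩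

lemma restrict_pi (n : ℕ) :
    (volume : Measure (Fin n → ℝ)).restrict (Set.univ.pi fun _ => Set.Icc (0:ℝ) 1)
      = Measure.pi fun _ : Fin n => mIcc := by
  refine (Measure.pi_eq (μ := fun _ : Fin n => mIcc) fun s hs => ?_).symm
  rw [Measure.restrict_apply (MeasurableSet.univ_pi hs), ← Set.pi_inter_distrib, volume_pi,
    Measure.pi_pi]
  exact Finset.prod_congr rfl fun i _ => (Measure.restrict_apply (hs i)).symm

lemma pow_card_eq_prod {α : Type*} [Fintype α] (q : ℝ) (P : α → Prop) [DecidablePred P] :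
    q ^ (Finset.univ.filter P).card = ∏ a, if P a then q else 1 := by
  rw [Finset.prod_ite, Finset.prod_const, Finset.prod_const, one_pow, mul_one]

lemma integral_pi_pow (ν : Measure ℝ) [IsProbabilityMeasure ν] (n : ℕ) (f : ℝ → ℝ) :
    (∫ x, (∏ i, f (x i)) ∂(Measure.pi fun _ : Fin n => ν)) = (∫ a, f a ∂ν) ^ n := by
  induction n with
  | zero => simp [Measure.pi_of_empty]
  | succ k ih =>
      have h := (measurePreserving_piFinSuccAbove (fun _ : Fin (k + 1) => ν) 0).symm
      rw [← h.integral_comp']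
      simp_rw [MeasurableEquiv.piFinSuccAbove_symm_apply, Fin.insertNthEquiv, Equiv.coe_fn_mk,
        Fin.insertNth_zero, Fin.prod_univ_succ, Fin.cons_zero, Fin.cons_succ, cast_eq]
      rw [integral_prod_mul f (fun x : Fin k → ℝ => ∏ i, f (x i)), ih, ← pow_succ']

/-! ### membership in `[0,1]` helpers -/

lemma mem01_ite {q : ℝ} (hq0 : 0 ≤ q) (hq1 : q ≤ 1) (c : Prop) [Decidable c] :
    (if c then q else 1) ∈ Set.Icc (0:ℝ) 1 := by
  split <;> exact ⟨by norm_num [hq0], by norm_num [hq1]⟩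

lemma mem01_prod {ι : Type*} [Fintype ι] {f : ι → ℝ} (h : ∀ i, f i ∈ Set.Icc (0:ℝ) 1) :
    (∏ i, f i) ∈ Set.Icc (0:ℝ) 1 :=
  ⟨Finset.prod_nonneg fun i _ => (h i).1,
   Finset.prod_le_one (fun i _ => (h i).1) (fun i _ => (h i).2)⟩

lemma mem01_mul {a b : ℝ} (ha : a ∈ Set.Icc (0:ℝ) 1) (hb : b ∈ Set.Icc (0:ℝ) 1) :
    a * b ∈ Set.Icc (0:ℝ) 1 :=
  ⟨mul_nonneg ha.1 hb.1, by nlinarith [ha.1, ha.2, hb.1, hb.2]⟩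

lemma mem01_pow {a : ℝ} (ha : a ∈ Set.Icc (0:ℝ) 1) (n : ℕ) : a ^ n ∈ Set.Icc (0:ℝ) 1 :=
  ⟨pow_nonneg ha.1 n, pow_le_one₀ ha.1 ha.2⟩

lemma mem01_abs {a : ℝ} (ha : a ∈ Set.Icc (0:ℝ) 1) : |a| ≤ 1 := by
  rw [abs_of_nonneg ha.1]; exact ha.2

lemma mem01_integral {α : Type*} [MeasurableSpace α] {ν : Measure α} [IsProbabilityMeasure ν]
    {f : α → ℝ} (h : ∀ x, f x ∈ Set.Icc (0:ℝ) 1) :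
    (∫ x, f x ∂ν) ∈ Set.Icc (0:ℝ) 1 := by
  refine ⟨integral_nonneg fun x => (h x).1, ?_⟩
  have := norm_integral_le_of_norm_le_const (μ := ν) (C := 1)
    (Filter.Eventually.of_forall fun x => by
      rw [Real.norm_eq_abs]; exact mem01_abs (h x))
  rw [probReal_univ] at this
  simpa using (le_abs_self _).trans (by simpa [Real.norm_eq_abs] using this)

lemma bdd_integrable {α : Type*} [MeasurableSpace α] {ν : Measure α} [IsFiniteMeasure ν]
    {f : α → ℝ} (hm : Measurable f) (h : ∀ x, |f x| ≤ 1) : Integrable f ν :=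
  (integrable_const (1:ℝ)).mono' hm.aestronglyMeasurable
    (Filter.Eventually.of_forall fun x => by simpa [Real.norm_eq_abs] using h x)

/-! ### Chebyshev -/

lemma cheb {f g : ℝ → ℝ} (hfmono : Monotone f) (hganti : Antitone g)
    (hfm : Measurable f) (hgm : Measurable g)
    (hfb : ∀ x, f x ∈ Set.Icc (0:ℝ) 1) (hgb : ∀ x, g x ∈ Set.Icc (0:ℝ) 1) :
    ∫ x, f x * g x ∂mIcc ≤ (∫ x, f x ∂mIcc) * ∫ x, g x ∂mIcc := by
  have hif : Integrable f mIcc := bdd_integrable hfm fun x => mem01_abs (hfb x)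
  have hig : Integrable g mIcc := bdd_integrable hgm fun x => mem01_abs (hgb x)
  have key : 0 ≤ ∫ p, (f p.1 - f p.2) * (g p.2 - g p.1) ∂(mIcc.prod mIcc) := by
    refine integral_nonneg fun p => ?_
    show (0:ℝ) ≤ _
    rcases le_total p.1 p.2 with h | h
    · nlinarith [hfmono h, hganti h]
    · nlinarith [hfmono h, hganti h]
  have e1 : ∫ p : ℝ × ℝ, f p.1 * g p.2 ∂(mIcc.prod mIcc)
      = (∫ x, f x ∂mIcc) * ∫ x, g x ∂mIcc := integral_prod_mul f g
  have e2 : ∫ p : ℝ × ℝ, g p.1 * f p.2 ∂(mIcc.prod mIcc)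
      = (∫ x, g x ∂mIcc) * ∫ x, f x ∂mIcc := integral_prod_mul g f
  have e3 : ∫ p : ℝ × ℝ, f p.1 * g p.1 ∂(mIcc.prod mIcc) = ∫ x, f x * g x ∂mIcc := by
    have := integral_prod_mul (μ := mIcc) (ν := mIcc) (fun x => f x * g x) (fun _ => (1:ℝ))
    simpa using this
  have e4 : ∫ p : ℝ × ℝ, f p.2 * g p.2 ∂(mIcc.prod mIcc) = ∫ x, f x * g x ∂mIcc := by
    have := integral_prod_mul (μ := mIcc) (ν := mIcc) (fun _ => (1:ℝ)) (fun x => f x * g x)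
    simpa using this
  have i1 : Integrable (fun p : ℝ × ℝ => f p.1 * g p.2) (mIcc.prod mIcc) := hif.mul_prod hig
  have i2 : Integrable (fun p : ℝ × ℝ => g p.1 * f p.2) (mIcc.prod mIcc) := hig.mul_prod hif
  have i3 : Integrable (fun p : ℝ × ℝ => f p.1 * g p.1) (mIcc.prod mIcc) :=
    bdd_integrable ((hfm.comp measurable_fst).mul (hgm.comp measurable_fst))
      (fun p => mem01_abs (mem01_mul (hfb _) (hgb _)))
  have i4 : Integrable (fun p : ℝ × ℝ => f p.2 * g p.2) (mIcc.prod mIcc) :=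
    bdd_integrable ((hfm.comp measurable_snd).mul (hgm.comp measurable_snd))
      (fun p => mem01_abs (mem01_mul (hfb _) (hgb _)))
  have hfun : (fun p : ℝ × ℝ => (f p.1 - f p.2) * (g p.2 - g p.1))
      = fun p => f p.1 * g p.2 + g p.1 * f p.2 - (f p.1 * g p.1 + f p.2 * g p.2) := by
    funext p; ring
  have i12 : Integrable (fun p : ℝ × ℝ => f p.1 * g p.2 + g p.1 * f p.2) (mIcc.prod mIcc) := by
    exact i1.add i2
  have i34 : Integrable (fun p : ℝ × ℝ => f p.1 * g p.1 + f p.2 * g p.2) (mIcc.prod mIcc) := by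
    exact i3.add i4
  rw [hfun, integral_sub i12 i34, integral_add i1 i2, integral_add i3 i4,
    e1, e2, e3, e4] at key
  linarith

lemma integral_symm_m (f : ℝ → ℝ) : ∫ a, f (1 - a) ∂mIcc = ∫ a, f a ∂mIcc := by
  have h0 : ∀ g : ℝ → ℝ, ∫ a, g a ∂mIcc = ∫ a in (0:ℝ)..1, g a := by
    intro g
    rw [intervalIntegral.integral_of_le zero_le_one, mIcc, ← integral_Icc_eq_integral_Ioc]
  rw [h0, h0, intervalIntegral.integral_comp_sub_left f 1]
  norm_num

section mono

variable {q : ℝ}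

lemma mono_prod_ite (hq0 : 0 ≤ q) (hq1 : q ≤ 1) {k : ℕ} (y : Fin k → ℝ) :
    Monotone fun a : ℝ => ∏ u, if a < y u then q else 1 := by
  intro a b hab
  refine Finset.prod_le_prod (fun u _ => ?_) (fun u _ => ?_)
  · split
    · exact hq0
    · norm_num
  · by_cases h : b < y u
    · simp [h, lt_of_le_of_lt hab h]
    · simp only [h, if_false]
      split
      · exact hq1
      · exact le_refl 1

lemma anti_prod_ite (hq0 : 0 ≤ q) (hq1 : q ≤ 1) {k : ℕ} (z : Fin k → ℝ) :
    Antitone fun a : ℝ => ∏ w, if 1 - a < z w then q else 1 := by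
  intro a b hab
  refine Finset.prod_le_prod (fun w _ => ?_) (fun w _ => ?_)
  · split
    · exact hq0
    · norm_num
  · by_cases h : 1 - a < z w
    · simp [h, lt_of_le_of_lt (by linarith : 1 - b ≤ 1 - a) h]
    · simp only [h, if_false]
      split
      · exact hq1
      · exact le_refl 1

end mono

/-- `A_{N,r}(q) = ∫_{[0,1]^N} ∫_{[0,1]^r} q^{#{(i,u) : y_u > t_i}} dy dt`. -/
def Aint (q : ℝ) (N r : ℕ) : ℝ :=
  ∫ t in Set.univ.pi fun _ : Fin N => Set.Icc (0 : ℝ) 1,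
    ∫ y in Set.univ.pi fun _ : Fin r => Set.Icc (0 : ℝ) 1,
      q ^ (Finset.univ.filter fun p : Fin N × Fin r => t p.1 < y p.2).card

lemma Aint_eq (q : ℝ) (hq0 : 0 ≤ q) (hq1 : q ≤ 1) (N k : ℕ) :
    Aint q N k = ∫ y, (∫ a, (∏ u, if a < y u then q else 1) ∂mIcc) ^ N
      ∂(Measure.pi fun _ : Fin k => mIcc) := by
  have hmeas : Measurable (Function.uncurry fun (t : Fin N → ℝ) (y : Fin k → ℝ) =>
      ∏ i, ∏ u, if t i < y u then q else 1) := by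
    apply Finset.measurable_prod
    intro i _
    apply Finset.measurable_prod
    intro u _
    exact Measurable.ite (measurableSet_lt (by fun_prop) (by fun_prop))
      measurable_const measurable_const
  have hint : Integrable (Function.uncurry fun (t : Fin N → ℝ) (y : Fin k → ℝ) =>
      ∏ i, ∏ u, if t i < y u then q else 1)
      ((Measure.pi fun _ : Fin N => mIcc).prod (Measure.pi fun _ : Fin k => mIcc)) :=
    bdd_integrable hmeas fun p =>
      mem01_abs (mem01_prod fun i => mem01_prod fun u => mem01_ite hq0 hq1 _)
  unfold Aint
  simp only [restrict_pi]
  have h1 : ∀ (t : Fin N → ℝ) (y : Fin k → ℝ),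
      (q : ℝ) ^ (Finset.univ.filter fun p : Fin N × Fin k => t p.1 < y p.2).card
        = ∏ i, ∏ u, if t i < y u then q else 1 := by
    intro t y
    rw [pow_card_eq_prod q fun p : Fin N × Fin k => t p.1 < y p.2, Fintype.prod_prod_type]
  simp_rw [h1]
  rw [integral_integral_swap hint]
  have h2 : ∀ y : Fin k → ℝ,
      (∫ t, ∏ i, ∏ u, (if t i < y u then q else 1) ∂(Measure.pi fun _ : Fin N => mIcc))
        = (∫ a, (∏ u, if a < y u then q else 1) ∂mIcc) ^ N :=
    fun y => integral_pi_pow mIcc N fun a => ∏ u, if a < y u then q else 1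
  simp_rw [h2]

lemma meas_int_param {q : ℝ} {k : ℕ} :
    Measurable fun y : Fin k → ℝ => ∫ a, (∏ u, if a < y u then q else 1) ∂mIcc := by
  have hm : StronglyMeasurable fun v : (Fin k → ℝ) × ℝ => ∏ u, if v.2 < v.1 u then q else 1 := by
    apply Measurable.stronglyMeasurable
    apply Finset.measurable_prod
    intro u _
    exact Measurable.ite (measurableSet_lt (by fun_prop) (by fun_prop))
      measurable_const measurable_const
  exact (hm.integral_prod_right' (ν := mIcc)).measurable

lemma meas_int_param' {q : ℝ} {k : ℕ} :
    Measurable fun z : Fin k → ℝ => ∫ a, (∏ w, if 1 - a < z w then q else 1) ∂mIcc := by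
  have hm : StronglyMeasurable fun v : (Fin k → ℝ) × ℝ =>
      ∏ w, if 1 - v.2 < v.1 w then q else 1 := by
    apply Measurable.stronglyMeasurable
    apply Finset.measurable_prod
    intro w _
    exact Measurable.ite (measurableSet_lt (by fun_prop) (by fun_prop))
      measurable_const measurable_const
  exact (hm.integral_prod_right' (ν := mIcc)).measurable

/-- Opposite monotonicities: with
`B_r(t) = ∫_{[0,1]^r} q^{#{(i,u) : y_u > t_i}} dy` and
`C_s(t) = ∫_{[0,1]^s} q^{#{(i,w) : z_w > 1 − t_i}} dz`, one has
`∫_{[0,1]^N} B_r(t) C_s(t) dt ≤ A_{N,r}(q) A_{N,s}(q)`. -/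
theorem stmt_13 (q : ℝ) (hq0 : 0 < q) (hq1 : q < 1) (N r s : ℕ) :
    (∫ t in Set.univ.pi fun _ : Fin N => Set.Icc (0 : ℝ) 1,
      (∫ y in Set.univ.pi fun _ : Fin r => Set.Icc (0 : ℝ) 1,
        q ^ (Finset.univ.filter fun p : Fin N × Fin r => t p.1 < y p.2).card) *
      (∫ z in Set.univ.pi fun _ : Fin s => Set.Icc (0 : ℝ) 1,
        q ^ (Finset.univ.filter fun p : Fin N × Fin s => 1 - t p.1 < z p.2).card)) ≤
      Aint q N r * Aint q N s := by
  have hq0' : (0:ℝ) ≤ q := hq0.le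
  have hq1' : q ≤ 1 := hq1.le
  -- measurability and integrability of the big kernel
  have hmeasK : Measurable (Function.uncurry
      fun (t : Fin N → ℝ) (p : (Fin r → ℝ) × (Fin s → ℝ)) =>
        ∏ i, ((∏ u, if t i < p.1 u then q else 1) *
          (∏ w, if 1 - t i < p.2 w then q else 1))) := by
    apply Finset.measurable_prod
    intro i _
    apply Measurable.mul
    · apply Finset.measurable_prod
      intro u _
      exact Measurable.ite (measurableSet_lt (by fun_prop) (by fun_prop))
        measurable_const measurable_const
    · apply Finset.measurable_prod
      intro w _
      exact Measurable.ite (measurableSet_lt (by fun_prop) (by fun_prop))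
        measurable_const measurable_const
  have hswap : Integrable (Function.uncurry
      fun (t : Fin N → ℝ) (p : (Fin r → ℝ) × (Fin s → ℝ)) =>
        ∏ i, ((∏ u, if t i < p.1 u then q else 1) *
          (∏ w, if 1 - t i < p.2 w then q else 1)))
      ((Measure.pi fun _ : Fin N => mIcc).prod
        ((Measure.pi fun _ : Fin r => mIcc).prod (Measure.pi fun _ : Fin s => mIcc))) :=
    bdd_integrable hmeasK fun p => mem01_abs (mem01_prod fun i =>
      mem01_mul (mem01_prod fun u => mem01_ite hq0' hq1' _)
        (mem01_prod fun w => mem01_ite hq0' hq1' _))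
  simp only [restrict_pi]
  simp_rw [pow_card_eq_prod]
  have hsplit : ∀ t : Fin N → ℝ,
      (∫ y, (∏ pq : Fin N × Fin r, if t pq.1 < y pq.2 then q else 1)
          ∂(Measure.pi fun _ : Fin r => mIcc)) *
      (∫ z, (∏ pq : Fin N × Fin s, if 1 - t pq.1 < z pq.2 then q else 1)
          ∂(Measure.pi fun _ : Fin s => mIcc))
      = ∫ p, (∏ pq : Fin N × Fin r, if t pq.1 < p.1 pq.2 then q else 1) *
          (∏ pq : Fin N × Fin s, if 1 - t pq.1 < p.2 pq.2 then q else 1)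
          ∂((Measure.pi fun _ : Fin r => mIcc).prod (Measure.pi fun _ : Fin s => mIcc)) :=
    fun t => (integral_prod_mul
      (fun y : Fin r → ℝ => ∏ pq : Fin N × Fin r, if t pq.1 < y pq.2 then q else 1)
      (fun z : Fin s → ℝ => ∏ pq : Fin N × Fin s, if 1 - t pq.1 < z pq.2 then q else 1)).symm
  simp_rw [hsplit]
  have hre : ∀ (t : Fin N → ℝ) (p : (Fin r → ℝ) × (Fin s → ℝ)),
      (∏ pq : Fin N × Fin r, if t pq.1 < p.1 pq.2 then q else 1) *
        (∏ pq : Fin N × Fin s, if 1 - t pq.1 < p.2 pq.2 then q else 1)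
      = ∏ i, ((∏ u, if t i < p.1 u then q else 1) *
          (∏ w, if 1 - t i < p.2 w then q else 1)) := by
    intro t p
    rw [Fintype.prod_prod_type (f := fun pq : Fin N × Fin r => if t pq.1 < p.1 pq.2 then q else 1),
      Fintype.prod_prod_type (f := fun pq : Fin N × Fin s => if 1 - t pq.1 < p.2 pq.2 then q else 1),
      ← Finset.prod_mul_distrib]
  simp_rw [hre]
  rw [integral_integral_swap hswap]
  have hin : ∀ p : (Fin r → ℝ) × (Fin s → ℝ),
      (∫ t, ∏ i, ((∏ u, if t i < p.1 u then q else 1) *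
          (∏ w, if 1 - t i < p.2 w then q else 1)) ∂(Measure.pi fun _ : Fin N => mIcc))
      = (∫ a, (∏ u, if a < p.1 u then q else 1) *
          (∏ w, if 1 - a < p.2 w then q else 1) ∂mIcc) ^ N :=
    fun p => integral_pi_pow mIcc N fun a =>
      (∏ u, if a < p.1 u then q else 1) * (∏ w, if 1 - a < p.2 w then q else 1)
  simp_rw [hin]
  have hmono :
      (∫ p, (∫ a, (∏ u, if a < p.1 u then q else 1) *
          (∏ w, if 1 - a < p.2 w then q else 1) ∂mIcc) ^ N
        ∂((Measure.pi fun _ : Fin r => mIcc).prod (Measure.pi fun _ : Fin s => mIcc)))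
      ≤ ∫ p, (∫ a, (∏ u, if a < p.1 u then q else 1) ∂mIcc) ^ N *
          (∫ a, (∏ w, if 1 - a < p.2 w then q else 1) ∂mIcc) ^ N
        ∂((Measure.pi fun _ : Fin r => mIcc).prod (Measure.pi fun _ : Fin s => mIcc)) := by
    refine integral_mono_of_nonneg (Filter.Eventually.of_forall fun p => ?_) ?_
      (Filter.Eventually.of_forall fun p => ?_)
    · exact pow_nonneg (integral_nonneg fun a =>
        mul_nonneg (mem01_prod fun u => mem01_ite hq0' hq1' _).1
          (mem01_prod fun w => mem01_ite hq0' hq1' _).1) N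
    · refine Integrable.mul_prod
        (f := fun y : Fin r → ℝ => (∫ a, (∏ u, if a < y u then q else 1) ∂mIcc) ^ N)
        (g := fun z : Fin s → ℝ => (∫ a, (∏ w, if 1 - a < z w then q else 1) ∂mIcc) ^ N)
        ?_ ?_
      · exact bdd_integrable (meas_int_param.pow_const N) fun y =>
          mem01_abs (mem01_pow (mem01_integral fun a =>
            mem01_prod fun u => mem01_ite hq0' hq1' _) N)
      · exact bdd_integrable (meas_int_param'.pow_const N) fun z =>
          mem01_abs (mem01_pow (mem01_integral fun a =>
            mem01_prod fun w => mem01_ite hq0' hq1' _) N)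
    · have hfm : Measurable fun a : ℝ => ∏ u, if a < p.1 u then q else 1 := by
        apply Finset.measurable_prod
        intro u _
        exact Measurable.ite (measurableSet_lt measurable_id measurable_const)
          measurable_const measurable_const
      have hgm : Measurable fun a : ℝ => ∏ w, if 1 - a < p.2 w then q else 1 := by
        apply Finset.measurable_prod
        intro w _
        exact Measurable.ite (measurableSet_lt (by fun_prop) measurable_const)
          measurable_const measurable_const
      have hch := cheb (mono_prod_ite hq0' hq1' p.1) (anti_prod_ite hq0' hq1' p.2) hfm hgm
        (fun a => mem01_prod fun u => mem01_ite hq0' hq1' _)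
        (fun a => mem01_prod fun w => mem01_ite hq0' hq1' _)
      calc (∫ a, (∏ u, if a < p.1 u then q else 1) *
              (∏ w, if 1 - a < p.2 w then q else 1) ∂mIcc) ^ N
          ≤ ((∫ a, (∏ u, if a < p.1 u then q else 1) ∂mIcc) *
              ∫ a, (∏ w, if 1 - a < p.2 w then q else 1) ∂mIcc) ^ N := by
            refine pow_le_pow_left₀ (integral_nonneg fun a =>
              mul_nonneg (mem01_prod fun u => mem01_ite hq0' hq1' _).1
                (mem01_prod fun w => mem01_ite hq0' hq1' _).1) hch N
        _ = (∫ a, (∏ u, if a < p.1 u then q else 1) ∂mIcc) ^ N *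
              (∫ a, (∏ w, if 1 - a < p.2 w then q else 1) ∂mIcc) ^ N := mul_pow _ _ N
  refine hmono.trans (le_of_eq ?_)
  rw [integral_prod_mul
    (fun y : Fin r → ℝ => (∫ a, (∏ u, if a < y u then q else 1) ∂mIcc) ^ N)
    (fun z : Fin s → ℝ => (∫ a, (∏ w, if 1 - a < z w then q else 1) ∂mIcc) ^ N)]
  have hsym : ∀ z : Fin s → ℝ,
      (∫ a, (∏ w, if 1 - a < z w then q else 1) ∂mIcc)
        = ∫ a, (∏ w, if a < z w then q else 1) ∂mIcc :=
    fun z => integral_symm_m fun b => ∏ w, if b < z w then q else 1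
  simp_rw [hsym]
  rw [← Aint_eq q hq0' hq1' N r, ← Aint_eq q hq0' hq1' N s]

end
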